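/- (Lemma 1) For every nonempty substring S of a string T that is not a minimal substring of T, there exists a minimal substring S_min of T which is a substring of S and satisfies cover(S_min) ⊆ cover(S). -/

import Mathlib

variable {α : Type*} [DecidableEq α]

/-- `occ T S`: the set of 1-based starting positions of occurrences of `S` in `T`,
i.e. `{ i ∈ [1, |T|-|S|+1] : T[i..i+|S|-1] = S }`. -/
def occ (T S : List α) : Finset ℕ :=
  (Finset.Icc 1 (T.length + 1 - S.length)).filter fun i =>
    (T.drop (i - 1)).take S.length = S

/-- `cover T S`: the set of 1-based text positions covered by some occurrence of `S` in `T`. -/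
def cover (T S : List α) : Finset ℕ :=
  (occ T S).biUnion fun i => Finset.Icc i (i + S.length - 1)

/-- `Γ ⊆ [1, |T|]` is a string attractor of `T`: every nonempty substring of `T`
has an occurrence covering a position of `Γ`. -/
def IsAttractor (T : List α) (Γ : Finset ℕ) : Prop :=
  Γ ⊆ Finset.Icc 1 T.length ∧
    ∀ P : List α, P ≠ [] → P <:+: T → (Γ ∩ cover T P).Nonempty

/-- `γ(T)`: the smallest size of a string attractor of `T`. -/
noncomputable def gammaSize (T : List α) : ℕ :=
  sInf {k | ∃ Γ : Finset ℕ, IsAttractor T Γ ∧ Γ.card = k}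

/-- `S` is a minimal substring of `T`: a nonempty substring of `T` all of whose proper
nonempty substrings occur strictly more often in `T` than `S` does. -/
def MinimalSubstring (T S : List α) : Prop :=
  S ≠ [] ∧ S <:+: T ∧
    ∀ R : List α, R ≠ [] → R <:+: S → R ≠ S → (occ T S).card < (occ T R).card

lemma mem_occ_iff {T S : List α} {i : ℕ} :
    i ∈ occ T S ↔ (1 ≤ i ∧ i ≤ T.length + 1 - S.length) ∧
      (T.drop (i - 1)).take S.length = S := by
  simp [occ, Finset.mem_filter, Finset.mem_Icc]

lemma occ_step (T X R Y : List α) (hR : R ≠ []) {i : ℕ}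
    (hi : i ∈ occ T (X ++ R ++ Y)) : i + X.length ∈ occ T R := by
  rw [mem_occ_iff] at hi ⊢
  obtain ⟨⟨h1, h2⟩, h3⟩ := hi
  have hSlen : (X ++ R ++ Y).length = X.length + R.length + Y.length := by simp; omega
  have hRpos : 0 < R.length := List.length_pos_iff.mpr hR
  have hlen : X.length + R.length + Y.length ≤ T.length - (i - 1) := by
    have := congrArg List.length h3
    simp [List.length_take] at this
    omega
  have hTlen : i - 1 + (X.length + R.length + Y.length) ≤ T.length := by omega
  have hdecomp : T.drop (i - 1) = (X ++ R ++ Y) ++ (T.drop (i - 1)).drop (X ++ R ++ Y).length := by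
    conv_lhs => rw [← List.take_append_drop (X ++ R ++ Y).length (T.drop (i - 1))]
    rw [h3]
  refine ⟨⟨by omega, by omega⟩, ?_⟩
  have hdd : T.drop (i + X.length - 1) = (T.drop (i - 1)).drop X.length := by
    rw [List.drop_drop]
    congr 1
    omega
  rw [hdd, hdecomp]
  have : (X ++ R ++ Y) ++ (T.drop (i - 1)).drop (X ++ R ++ Y).length
      = X ++ (R ++ (Y ++ (T.drop (i - 1)).drop (X ++ R ++ Y).length)) := by
    simp [List.append_assoc]
  rw [this, List.drop_left]
  exact List.take_left

lemma cover_subset_of_card_le (T S R X Y : List α) (hR : R ≠ [])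
    (hXY : X ++ R ++ Y = S) (hcard : (occ T R).card ≤ (occ T S).card) :
    cover T R ⊆ cover T S := by
  subst hXY
  have hinj : Set.InjOn (· + X.length) (occ T (X ++ R ++ Y)) := fun a _ b _ h => by simpa using h
  have himg : (occ T (X ++ R ++ Y)).image (· + X.length) ⊆ occ T R := by
    intro j hj
    obtain ⟨i, hi, rfl⟩ := Finset.mem_image.mp hj
    exact occ_step T X R Y hR hi
  have hcards : (occ T R).card ≤ ((occ T (X ++ R ++ Y)).image (· + X.length)).card := by
    rw [Finset.card_image_of_injOn hinj]; exact hcard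
  have heq : (occ T (X ++ R ++ Y)).image (· + X.length) = occ T R :=
    Finset.eq_of_subset_of_card_le himg hcards
  intro j hj
  simp only [cover, Finset.mem_biUnion, Finset.mem_Icc] at hj ⊢
  obtain ⟨p, hp, hj1, hj2⟩ := hj
  rw [← heq] at hp
  obtain ⟨i, hi, rfl⟩ := Finset.mem_image.mp hp
  have hRpos : 0 < R.length := List.length_pos_iff.mpr hR
  have hSlen : (X ++ R ++ Y).length = X.length + R.length + Y.length := by simp; omega
  exact ⟨i, hi, by omega, by omega⟩

/-- Lemma 1: for every nonempty substring `S` of `T` that is not a minimal substring of `T`,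
there is a minimal substring `Smin` of `T` that is a substring of `S` with
`cover(Smin) ⊆ cover(S)`. -/
theorem exists_minimalSubstring_cover_subset (T S : List α)
    (hSne : S ≠ []) (hS : S <:+: T) (hSnotmin : ¬ MinimalSubstring T S) :
    ∃ Smin : List α, MinimalSubstring T Smin ∧ Smin <:+: S ∧
      cover T Smin ⊆ cover T S := by
  have main : ∀ n (S : List α), S.length ≤ n → S ≠ [] → S <:+: T →
      ¬ MinimalSubstring T S →
      ∃ Smin : List α, MinimalSubstring T Smin ∧ Smin <:+: S ∧
        cover T Smin ⊆ cover T S := by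
    intro n
    induction n with
    | zero =>
      intro S hlen hne _ _
      exact absurd (List.eq_nil_of_length_eq_zero (Nat.le_zero.mp hlen)) hne
    | succ n ih =>
      intro S hlen hSne hS hmin
      obtain ⟨R, hRne, hRS, hRneS, hcard⟩ :
          ∃ R : List α, R ≠ [] ∧ R <:+: S ∧ R ≠ S ∧ (occ T R).card ≤ (occ T S).card := by
        by_contra h
        push_neg at h
        exact hmin ⟨hSne, hS, fun R h1 h2 h3 => h R h1 h2 h3⟩
      obtain ⟨X, Y, hXY⟩ := hRS
      have hcov : cover T R ⊆ cover T S :=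
        cover_subset_of_card_le T S R X Y hRne hXY hcard
      have hRS' : R <:+: S := ⟨X, Y, hXY⟩
      have hRlen : R.length < S.length := by
        have hle := hRS'.length_le
        rcases lt_or_eq_of_le hle with h | h
        · exact h
        · exact absurd (hRS'.eq_of_length h) hRneS
      by_cases hRmin : MinimalSubstring T R
      · exact ⟨R, hRmin, hRS', hcov⟩
      · obtain ⟨Smin, h1, h2, h3⟩ :=
          ih R (by omega) hRne (hRS'.trans hS) hRmin
        exact ⟨Smin, h1, h2.trans hRS', h3.trans hcov⟩
  exact main S.length S le_rfl hSne hS hSnotmin
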